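/- Let T > 0 and let (Ω, 𝓕, P) be a probability space. Let g, Z : Ω × [0,T] → [0,∞) be jointly measurable processes, let κ ∈ (0,1), q ∈ (κ,1) and set p₀ := q/κ. Then E[ ( ∫_0^T g_r^κ · 𝟙_{\{Z_r ≥ 1\}} dr )^{p₀} ] ≤ T^{p₀ − 1 + (2−q)(1−q)/2} · ( E ∫_0^T g_r dr )^{q} · ( E ( ∫_0^T Z_r^2 dr )^{q/2} )^{1−q}. -/

import Mathlib

open MeasureTheory Set
open scoped ENNReal

lemma holder_time {α : Type*} [MeasurableSpace α] (μ : Measure α)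
    {f : α → ℝ≥0∞} (hf : AEMeasurable f μ) {p : ℝ} (hp : 1 < p) :
    ∫⁻ a, f a ∂μ ≤ (∫⁻ a, f a ^ p ∂μ) ^ (1 / p) * (μ univ) ^ (1 - 1 / p) := by
  have hp0 : (0:ℝ) < p := lt_trans one_pos hp
  have hpq : p.HolderConjugate (p / (p - 1)) := (Real.holderConjugate_iff_eq_conjExponent hp).2 rfl
  have h := ENNReal.lintegral_mul_le_Lp_mul_Lq μ hpq hf
    (aemeasurable_const (b := (1:ℝ≥0∞)))
  simp only [Pi.mul_apply, mul_one, ENNReal.one_rpow, lintegral_const, one_mul,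
    lintegral_one] at h
  have he : 1 / (p / (p - 1)) = 1 - 1 / p := by field_simp
  rwa [he] at h

lemma holder_time_pow {α : Type*} [MeasurableSpace α] (μ : Measure α)
    {f : α → ℝ≥0∞} (hf : AEMeasurable f μ) {p : ℝ} (hp : 1 < p) :
    (∫⁻ a, f a ∂μ) ^ p ≤ (μ univ) ^ (p - 1) * ∫⁻ a, f a ^ p ∂μ := by
  have hp0 : (0:ℝ) < p := lt_trans one_pos hp
  have h := ENNReal.rpow_le_rpow (holder_time μ hf hp) hp0.le
  calc (∫⁻ a, f a ∂μ) ^ p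
      ≤ (((∫⁻ a, f a ^ p ∂μ) ^ (1 / p)) * (μ univ) ^ (1 - 1 / p)) ^ p := h
    _ = (μ univ) ^ (p - 1) * ∫⁻ a, f a ^ p ∂μ := by
        rw [ENNReal.mul_rpow_of_nonneg _ _ hp0.le, ← ENNReal.rpow_mul,
          ← ENNReal.rpow_mul, one_div_mul_cancel hp0.ne', ENNReal.rpow_one,
          show (1 - 1 / p) * p = p - 1 by field_simp, mul_comm]

/-- Combination of (eq.split2) and (eq.split3) from the proof of Theorem 3.5:
`E (∫_0^T g^κ 𝟙_{Z ≥ 1})^{p₀} ≤ T^{p₀−1+(2−q)(1−q)/2} (E∫_0^T g)^q (E(∫_0^T Z²)^{q/2})^{1−q}`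
with `p₀ = q/κ`.  All expectations may be infinite. -/
theorem stmt_11 {Ω : Type*} [MeasurableSpace Ω] (P : Measure Ω) [IsProbabilityMeasure P]
    (T : ℝ) (hT : 0 < T)
    (g Z : Ω → ℝ → ℝ)
    (hg : Measurable (Function.uncurry g)) (hZ : Measurable (Function.uncurry Z))
    (hg0 : ∀ ω r, 0 ≤ g ω r) (hZ0 : ∀ ω r, 0 ≤ Z ω r)
    (κ q : ℝ) (hκ : κ ∈ Set.Ioo (0:ℝ) 1) (hq : q ∈ Set.Ioo κ 1)
    (p₀ : ℝ) (hp₀ : p₀ = q / κ) :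
    ∫⁻ ω, (∫⁻ r in Icc (0:ℝ) T,
        ENNReal.ofReal (if 1 ≤ Z ω r then g ω r ^ κ else 0)) ^ p₀ ∂P
      ≤ ENNReal.ofReal (T ^ (p₀ - 1 + (2 - q) * (1 - q) / 2)) *
          (∫⁻ ω, (∫⁻ r in Icc (0:ℝ) T, ENNReal.ofReal (g ω r)) ∂P) ^ q *
          (∫⁻ ω, (∫⁻ r in Icc (0:ℝ) T, ENNReal.ofReal (Z ω r ^ 2)) ^ (q / 2) ∂P) ^ (1 - q) := by
  obtain ⟨hκ0, hκ1⟩ := hκ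
  obtain ⟨hqκ, hq1⟩ := hq
  have hq0 : 0 < q := hκ0.trans hqκ
  have hp₀1 : 1 < p₀ := by rw [hp₀]; exact (one_lt_div hκ0).2 hqκ
  have hp₀0 : (0:ℝ) < p₀ := lt_trans one_pos hp₀1
  set μ : Measure ℝ := volume.restrict (Icc (0:ℝ) T) with hμdef
  have hμuniv : μ univ = ENNReal.ofReal T := by
    rw [hμdef, Measure.restrict_apply_univ, Real.volume_Icc, sub_zero]
  set τ : ℝ≥0∞ := ENNReal.ofReal T with hτdef
  have hτ0 : τ ≠ 0 := (ENNReal.ofReal_pos.2 hT).ne'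
  have hτtop : τ ≠ ⊤ := ENNReal.ofReal_ne_top
  -- ENNReal-valued processes
  set G : Ω → ℝ → ℝ≥0∞ := fun ω r => ENNReal.ofReal (g ω r) with hGdef
  set ind : Ω → ℝ → ℝ≥0∞ := fun ω r => if 1 ≤ Z ω r then 1 else 0 with hinddef
  set W : Ω → ℝ → ℝ≥0∞ := fun ω r => ENNReal.ofReal (Z ω r ^ 2) with hWdef
  -- measurability on the product
  have hGm : Measurable fun p : Ω × ℝ => G p.1 p.2 := ENNReal.measurable_ofReal.comp hg
  have hsetm : MeasurableSet {p : Ω × ℝ | 1 ≤ Z p.1 p.2} :=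
    measurableSet_le measurable_const hZ
  have hindm : Measurable fun p : Ω × ℝ => ind p.1 p.2 :=
    Measurable.ite hsetm measurable_const measurable_const
  have hWm : Measurable fun p : Ω × ℝ => W p.1 p.2 :=
    ENNReal.measurable_ofReal.comp (hZ.pow_const 2)
  have hHm : Measurable fun p : Ω × ℝ => G p.1 p.2 ^ q * ind p.1 p.2 :=
    (hGm.pow_const q).mul hindm
  set π : Measure (Ω × ℝ) := P.prod μ with hπdef
  -- Step 1: pointwise in ω, Hölder in time with exponent p₀
  have step1 : ∀ ω, (∫⁻ r, ENNReal.ofReal (if 1 ≤ Z ω r then g ω r ^ κ else 0) ∂μ) ^ p₀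
      ≤ τ ^ (p₀ - 1) * ∫⁻ r, G ω r ^ q * ind ω r ∂μ := by
    intro ω
    have hfm : AEMeasurable
        (fun r => ENNReal.ofReal (if 1 ≤ Z ω r then g ω r ^ κ else 0)) μ := by
      refine (Measurable.aemeasurable ?_)
      refine ENNReal.measurable_ofReal.comp ?_
      exact Measurable.ite (measurableSet_le measurable_const hZ.of_uncurry_left)
        (hg.of_uncurry_left.pow_const κ) measurable_const
    have h := holder_time_pow μ hfm hp₀1
    rw [hμuniv] at h
    refine h.trans (le_of_eq ?_)
    congr 1
    refine lintegral_congr fun r => ?_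
    by_cases hzr : 1 ≤ Z ω r
    · simp only [hzr, if_true, hinddef, hGdef, mul_one]
      rw [← ENNReal.ofReal_rpow_of_nonneg (hg0 ω r) hκ0.le, ← ENNReal.rpow_mul,
        show κ * p₀ = q by rw [hp₀]; field_simp]
    · simp only [hzr, if_false, hinddef, mul_zero, ENNReal.ofReal_zero]
      exact ENNReal.zero_rpow_of_pos hp₀0
  -- Step 2: integrate over ω and pass to the product measure
  have step2 : ∫⁻ ω, (∫⁻ r, ENNReal.ofReal (if 1 ≤ Z ω r then g ω r ^ κ else 0) ∂μ) ^ p₀ ∂P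
      ≤ τ ^ (p₀ - 1) * ∫⁻ p, G p.1 p.2 ^ q * ind p.1 p.2 ∂π := by
    calc _ ≤ ∫⁻ ω, τ ^ (p₀ - 1) * ∫⁻ r, G ω r ^ q * ind ω r ∂μ ∂P :=
          lintegral_mono step1
      _ = τ ^ (p₀ - 1) * ∫⁻ ω, ∫⁻ r, G ω r ^ q * ind ω r ∂μ ∂P :=
          lintegral_const_mul' _ _ (ENNReal.rpow_ne_top_of_nonneg (by linarith) hτtop)
      _ = τ ^ (p₀ - 1) * ∫⁻ p, G p.1 p.2 ^ q * ind p.1 p.2 ∂π := by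
          rw [lintegral_prod _ hHm.aemeasurable]
  -- Step 3: Hölder on the product space with exponents 1/q, 1/(1-q)
  have hconj : (1/q).HolderConjugate (1/(1-q)) := by
    rw [Real.holderConjugate_iff]; constructor
    · rw [lt_div_iff₀ hq0]; linarith
    · rw [one_div, one_div, inv_inv, inv_inv]; ring
  have step3 : ∫⁻ p, G p.1 p.2 ^ q * ind p.1 p.2 ∂π
      ≤ (∫⁻ p, G p.1 p.2 ∂π) ^ q * (∫⁻ p, ind p.1 p.2 ∂π) ^ (1 - q) := by
    have h := ENNReal.lintegral_mul_le_Lp_mul_Lq π hconj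
      ((hGm.pow_const q).aemeasurable) hindm.aemeasurable
    simp only [Pi.mul_apply] at h
    refine h.trans (le_of_eq ?_)
    rw [one_div_one_div, one_div_one_div]
    congr 1
    · congr 1
      refine lintegral_congr fun p => ?_
      rw [← ENNReal.rpow_mul, mul_one_div_cancel hq0.ne', ENNReal.rpow_one]
    · congr 1
      refine lintegral_congr fun p => ?_
      by_cases hzp : 1 ≤ Z p.1 p.2
      · simp [hinddef, hzp]
      · simp only [hinddef, hzp, if_false]
        exact ENNReal.zero_rpow_of_pos (one_div_pos.2 (by linarith))
  -- Step 4: indicator bound 𝟙_{Z ≥ 1} ≤ (Z²)^{q/2}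
  have step4 : ∫⁻ p, ind p.1 p.2 ∂π ≤ ∫⁻ p, W p.1 p.2 ^ (q/2) ∂π := by
    refine lintegral_mono fun p => ?_
    by_cases hzp : 1 ≤ Z p.1 p.2
    · simp only [hinddef, hzp, if_true]
      have h1 : (1:ℝ≥0∞) ≤ W p.1 p.2 := by
        rw [hWdef, show (1:ℝ≥0∞) = ENNReal.ofReal 1 by simp]
        exact ENNReal.ofReal_le_ofReal (by nlinarith)
      calc (1:ℝ≥0∞) = 1 ^ (q/2) := (ENNReal.one_rpow _).symm
        _ ≤ W p.1 p.2 ^ (q/2) := ENNReal.rpow_le_rpow h1 (by positivity)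
    · simp [hinddef, hzp]
  -- Step 5: Hölder in time with exponent 2/q
  have step5 : ∫⁻ p, W p.1 p.2 ^ (q/2) ∂π
      ≤ τ ^ (1 - q/2) * ∫⁻ ω, (∫⁻ r, W ω r ∂μ) ^ (q/2) ∂P := by
    rw [hπdef, lintegral_prod _ (hWm.pow_const (q/2)).aemeasurable]
    calc ∫⁻ ω, ∫⁻ r, W ω r ^ (q/2) ∂μ ∂P
        ≤ ∫⁻ ω, (∫⁻ r, W ω r ∂μ) ^ (q/2) * τ ^ (1 - q/2) ∂P := by
          refine lintegral_mono fun ω => ?_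
          have hfm : AEMeasurable (fun r => W ω r ^ (q/2)) μ :=
            ((ENNReal.measurable_ofReal.comp
              (hZ.of_uncurry_left.pow_const 2)).pow_const (q/2)).aemeasurable
          have h := holder_time μ hfm (show (1:ℝ) < 2/q by
            rw [lt_div_iff₀ hq0]; linarith)
          rw [hμuniv] at h
          refine h.trans (le_of_eq ?_)
          rw [show 1/(2/q) = q/2 by field_simp]
          congr 2
          refine lintegral_congr fun r => ?_
          rw [← ENNReal.rpow_mul, show q/2 * (2/q) = 1 by field_simp, ENNReal.rpow_one]
      _ = τ ^ (1 - q/2) * ∫⁻ ω, (∫⁻ r, W ω r ∂μ) ^ (q/2) ∂P := by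
          rw [lintegral_mul_const' _ _
            (ENNReal.rpow_ne_top_of_nonneg (by linarith) hτtop), mul_comm]
  -- combine
  have hE1 : ∫⁻ p, G p.1 p.2 ∂π = ∫⁻ ω, ∫⁻ r, G ω r ∂μ ∂P :=
    lintegral_prod _ hGm.aemeasurable
  set E1 : ℝ≥0∞ := ∫⁻ ω, ∫⁻ r, G ω r ∂μ ∂P with hE1def
  set E2 : ℝ≥0∞ := ∫⁻ ω, (∫⁻ r, W ω r ∂μ) ^ (q/2) ∂P with hE2def
  have hfinal : ∫⁻ ω, (∫⁻ r, ENNReal.ofReal (if 1 ≤ Z ω r then g ω r ^ κ else 0) ∂μ) ^ p₀ ∂P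
      ≤ τ ^ (p₀ - 1) * (E1 ^ q * (τ ^ (1 - q/2) * E2) ^ (1 - q)) := by
    refine step2.trans ?_
    refine mul_le_mul_right ?_ _
    refine step3.trans ?_
    rw [hE1]
    exact mul_le_mul_right (ENNReal.rpow_le_rpow (step4.trans step5) (by linarith)) _
  refine hfinal.trans (le_of_eq ?_)
  rw [ENNReal.mul_rpow_of_nonneg _ _ (by linarith : (0:ℝ) ≤ 1 - q),
    ← ENNReal.rpow_mul]
  rw [show ENNReal.ofReal (T ^ (p₀ - 1 + (2 - q) * (1 - q) / 2))
      = τ ^ (p₀ - 1 + (2 - q) * (1 - q) / 2) by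
    rw [hτdef, ENNReal.ofReal_rpow_of_pos hT]]
  rw [show p₀ - 1 + (2 - q) * (1 - q) / 2 = (p₀ - 1) + (1 - q/2) * (1 - q) by ring,
    ENNReal.rpow_add _ _ hτ0 hτtop]
  ring
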